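/- Let G be a finite connected loopless multigraph. The boundary map on oriented edges, e ↦ [e⁺ − e⁻], induces a group isomorphism ∂_G : ℰ(G) → Jac(G), where ℰ(G) = ℤE/(𝒞 + 𝒞*) is the quotient of the free abelian group on the oriented edges by the sum of the integral cycle space and the integral cut space. -/

import Mathlib

attribute [local instance 10] Classical.propDecidable

/-- A finite multigraph, presented by darts (oriented edges): `rev` is the
fixed-point-free involution exchanging the two darts of each edge, and
`head d` is the vertex the dart `d` points to. -/
structure Multigraph where
  V : Type
  D : Type
  fV : Fintype V
  dV : DecidableEq V
  fD : Fintype D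
  dD : DecidableEq D
  rev : D → D
  rev_invol : Function.Involutive rev
  rev_ne : ∀ d : D, rev d ≠ d
  head : D → V

attribute [instance] Multigraph.fV Multigraph.dV Multigraph.fD Multigraph.dD

namespace Multigraph

variable (G : Multigraph)

/-- The tail (starting vertex) of a dart. -/
def tail (d : G.D) : G.V := G.head (G.rev d)

/-- `G` is loopless: no edge has equal endpoints. -/
def Loopless : Prop := ∀ d : G.D, G.head d ≠ G.tail d

/-- One-step adjacency between vertices. -/
def Adj (u v : G.V) : Prop := ∃ d : G.D, G.tail d = u ∧ G.head d = v

/-- `G` is connected. -/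
def Connected : Prop := ∀ u v : G.V, Relation.ReflTransGen G.Adj u v

/-- The degree of a vertex: the number of darts with tail `v`. -/
def degree (v : G.V) : ℕ := (Finset.univ.filter fun d : G.D => G.tail d = v).card

/-- The number of edges joining `v` to `w`. -/
def mul (v w : G.V) : ℕ :=
  (Finset.univ.filter fun d : G.D => G.tail d = v ∧ G.head d = w).card

/-! ### Divisors and the sandpile group -/

/-- The total degree homomorphism on divisors. -/
def degHom : (G.V → ℤ) →+ ℤ where
  toFun x := ∑ v, x v
  map_zero' := by simp
  map_add' x y := by simp [Finset.sum_add_distrib]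

/-- Degree-zero divisors. -/
def Div0 : AddSubgroup (G.V → ℤ) := G.degHom.ker

/-- The principal divisor of a lending move at `v`: `v` loses `deg v` chips and
each other vertex `w` gains `n(v,w)` chips. -/
def prin (v : G.V) : G.V → ℤ :=
  fun w => if w = v then -(G.degree v : ℤ) else (G.mul v w : ℤ)

/-- The subgroup of `ℤV` generated by all lending moves. -/
def Prin : AddSubgroup (G.V → ℤ) := AddSubgroup.closure (Set.range G.prin)

/-- Two divisors are linearly equivalent when they differ by a sequence of
lending moves. -/
def LinEquiv (D D' : G.V → ℤ) : Prop := D' - D ∈ G.Prin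

/-- The sandpile group (Jacobian) of `G`: degree-zero divisors modulo
linear equivalence. -/
def Jac := G.Div0 ⧸ (G.Prin.addSubgroupOf G.Div0)

instance : AddCommGroup G.Jac :=
  inferInstanceAs (AddCommGroup (G.Div0 ⧸ (G.Prin.addSubgroupOf G.Div0)))

/-- The divisor class of a degree-zero divisor in the sandpile group. -/
def divClass (D : G.Div0) : G.Jac := QuotientAddGroup.mk D

/-- The divisor `a - b` for vertices `a`, `b`. -/
def unitDivFun (a b : G.V) : G.V → ℤ :=
  fun w => (if w = a then 1 else 0) - (if w = b then 1 else 0)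

lemma unitDivFun_mem (a b : G.V) : G.unitDivFun a b ∈ G.Div0 := by
  simp [Div0, degHom, AddMonoidHom.mem_ker, unitDivFun, Finset.sum_sub_distrib]

/-- The divisor `a - b` as a degree-zero divisor. -/
def unitDiv (a b : G.V) : G.Div0 := ⟨G.unitDivFun a b, G.unitDivFun_mem a b⟩

/-- The class `[a - b] ∈ Jac(G)`. -/
def unitClass (a b : G.V) : G.Jac := G.divClass (G.unitDiv a b)

/-- The boundary of a dart: `∂ d = [d⁺ - d⁻] ∈ Jac(G)`. -/
def dartBoundary (d : G.D) : G.Jac := G.unitClass (G.head d) (G.tail d)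

/-! ### The group ℤE of formal sums of oriented edges -/

/-- `ℤE`: functions on darts that are antisymmetric under reversal;
this is the free abelian group on the oriented edges, with `-e` identified
with the oppositely oriented edge. -/
def EdgeGroup : AddSubgroup (G.D → ℤ) where
  carrier := {x | ∀ d, x (G.rev d) = -x d}
  add_mem' := by
    intro a b ha hb d
    simp only [Pi.add_apply, ha d, hb d]
    ring
  zero_mem' := by intro d; simp
  neg_mem' := by
    intro a ha d
    simp only [Pi.neg_apply, ha d]

/-- The element of `ℤE` corresponding to a single oriented edge (dart). -/
def dartVec (d : G.D) : G.D → ℤ :=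
  fun d' => if d' = d then 1 else if d' = G.rev d then -1 else 0

lemma dartVec_mem (d : G.D) : G.dartVec d ∈ G.EdgeGroup := by
  have hinj := G.rev_invol.injective
  intro d'
  unfold dartVec
  rcases eq_or_ne d' d with rfl | h1
  · simp [G.rev_ne d']
  · rcases eq_or_ne d' (G.rev d) with rfl | h2
    · simp [G.rev_invol d, G.rev_ne d]
    · have h3 : G.rev d' ≠ d := fun h => h2 (by rw [← h, G.rev_invol])
      have h4 : G.rev d' ≠ G.rev d := fun h => h1 (hinj h)
      simp [h1, h2, h3, h4]

/-- The vector of a list of darts (e.g. of a directed cycle). -/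
def listVec (l : List G.D) : G.D → ℤ := (l.map G.dartVec).sum

/-- `l` is a directed cycle: a nonempty closed walk of darts through
pairwise distinct vertices. -/
def IsDirCycle (l : List G.D) : Prop :=
  l ≠ [] ∧ l.Chain' (fun a b => G.head a = G.tail b) ∧
    (∀ a ∈ l.getLast?, ∀ b ∈ l.head?, G.head a = G.tail b) ∧
    (l.map G.tail).Nodup

/-- The integral cycle space `𝒞 ⊆ ℤE`. -/
def CycleSpace : AddSubgroup (G.D → ℤ) :=
  AddSubgroup.closure {x | ∃ l : List G.D, G.IsDirCycle l ∧ x = G.listVec l}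

/-- The cut determined by a set `U` of vertices, directed out of `U`. -/
def cutVec (U : Finset G.V) : G.D → ℤ := fun d =>
  if G.tail d ∈ U ∧ G.head d ∉ U then 1
  else if G.head d ∈ U ∧ G.tail d ∉ U then -1 else 0

/-- The integral cut space `𝒞* ⊆ ℤE`. -/
def CutSpace : AddSubgroup (G.D → ℤ) :=
  AddSubgroup.closure (Set.range G.cutVec)

/-- `ℰ(G) = ℤE / (𝒞 + 𝒞*)`. -/
def EGroup :=
  G.EdgeGroup ⧸ ((G.CycleSpace ⊔ G.CutSpace).addSubgroupOf G.EdgeGroup)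

instance : AddCommGroup G.EGroup :=
  inferInstanceAs
    (AddCommGroup (G.EdgeGroup ⧸ ((G.CycleSpace ⊔ G.CutSpace).addSubgroupOf G.EdgeGroup)))

/-- The class of an oriented edge in `ℰ(G)`. -/
def eClass (d : G.D) : G.EGroup :=
  QuotientAddGroup.mk ⟨G.dartVec d, G.dartVec_mem d⟩

/-- The boundary map `ℤE → ℤV`, sending an oriented edge `e` to `e⁺ - e⁻`
(when restricted to `ℤE ⊆ (D → ℤ)`). -/
def bMap : (G.D → ℤ) →+ (G.V → ℤ) where
  toFun x := fun v => ∑ d ∈ Finset.univ.filter (fun d => G.head d = v), x d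
  map_zero' := by funext v; simp
  map_add' x y := by funext v; simp [Finset.sum_add_distrib]

/-! ### Spanning trees -/

/-- Adjacency using only darts in `T`. -/
def treeAdj (T : Finset G.D) (u v : G.V) : Prop :=
  ∃ d ∈ T, G.tail d = u ∧ G.head d = v

/-- `T` (a reversal-closed set of darts) is a spanning tree: it is connected,
meets every vertex, and has exactly `|V| - 1` edges (hence is acyclic). -/
def IsSpanningTree (T : Finset G.D) : Prop :=
  (∀ d ∈ T, G.rev d ∈ T) ∧
    (∀ u v : G.V, Relation.ReflTransGen (G.treeAdj T) u v) ∧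
    T.card = 2 * (Fintype.card G.V - 1)

/-- The reversal involution as a permutation of darts. -/
def revPerm : Equiv.Perm G.D := Function.Involutive.toPerm G.rev G.rev_invol

end Multigraph

/-- A ribbon graph: a multigraph together with, at each vertex, a cyclic
ordering of the incident edges (darts).  `next d` is the dart following `d`
in the cyclic order at the tail of `d`. -/
structure RibbonGraph extends Multigraph where
  next : Equiv.Perm toMultigraph.D
  next_tail : ∀ d : toMultigraph.D, toMultigraph.tail (next d) = toMultigraph.tail d
  next_cyclic : ∀ d d' : toMultigraph.D,
    toMultigraph.tail d = toMultigraph.tail d' → next.SameCycle d d'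

namespace RibbonGraph

variable (G : RibbonGraph)

/-- The face permutation of a ribbon graph; its orbits are the faces of the
associated surface embedding (the orbit of a dart `d` is the face to the left
of `d`, when the cyclic orders are taken clockwise). -/
def facePerm : Equiv.Perm G.D := G.next * G.revPerm

/-- Darts lie in the same face when they are in the same orbit of the face
permutation. -/
def faceSetoid : Setoid G.D :=
  ⟨G.facePerm.SameCycle,
    ⟨fun x => Equiv.Perm.SameCycle.refl _ x, fun h => h.symm, fun h h' => h.trans h'⟩⟩

/-- The faces of the surface embedding determined by the ribbon structure. -/
def Faces := Quotient G.faceSetoid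

instance : Fintype G.Faces :=
  @Quotient.fintype _ _ G.faceSetoid
    (fun a b => inferInstanceAs (Decidable (G.facePerm.SameCycle a b)))

/-- The face to the left of a dart. -/
def leftFace (d : G.D) : G.Faces := Quotient.mk G.faceSetoid d

/-- The face to the right of a dart. -/
def rightFace (d : G.D) : G.Faces := G.leftFace (G.rev d)

/-- `G` is a planar ribbon graph: the surface it embeds in has genus `0`,
i.e. Euler's formula `|V| - |E| + |F| = 2` holds. -/
def IsPlanar : Prop :=
  Fintype.card G.V + Fintype.card G.Faces = Fintype.card G.D / 2 + 2

/-! ### Rotor-routing -/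

/-- A rotor configuration with basepoint `q`: a choice, for each vertex
`v ≠ q`, of a dart with tail `v`. -/
def RotorConfig (q : G.V) :=
  {ρ : (v : G.V) → v ≠ q → G.D // ∀ (v : G.V) (h : v ≠ q), G.tail (ρ v h) = v}

/-- Firing the vertex `v ≠ q` in a state (chip configuration, rotor
configuration): the rotor at `v` advances to the next dart in the cyclic
order at `v`, and one chip moves from `v` to the head of the new rotor. -/
def fire (q : G.V) (v : G.V) (hv : v ≠ q) (s : (G.V → ℤ) × G.RotorConfig q) :
    (G.V → ℤ) × G.RotorConfig q :=
  ((fun w => s.1 w - (if w = v then 1 else 0) +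
      (if w = G.head (G.next (s.2.1 v hv)) then 1 else 0)),
   ⟨fun u hu => if u = v then G.next (s.2.1 v hv) else s.2.1 u hu, by
      intro u hu
      by_cases h : u = v
      · simp only [if_pos h]
        rw [G.next_tail, s.2.2 v hv, h]
      · simp only [if_neg h]
        exact s.2.2 u hu⟩)

/-- A single legal rotor-routing step: fire some vertex `v ≠ q` carrying at
least one chip. -/
def Step (q : G.V) (s s' : (G.V → ℤ) × G.RotorConfig q) : Prop :=
  ∃ (v : G.V) (hv : v ≠ q), 1 ≤ s.1 v ∧ s' = G.fire q v hv s

/-- A state is terminal when no vertex other than `q` can be fired. -/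
def Terminal (q : G.V) (s : (G.V → ℤ) × G.RotorConfig q) : Prop :=
  ∀ v : G.V, v ≠ q → s.1 v ≤ 0

/-- `ρ` is the rotor configuration obtained by orienting the spanning tree
`T` towards the root `q`: every rotor is a dart of `T`, and following the
rotors from any vertex leads to `q`. -/
def TowardRoot (q : G.V) (T : Finset G.D) (ρ : G.RotorConfig q) : Prop :=
  ∀ (v : G.V) (h : v ≠ q), ρ.1 v h ∈ T ∧
    Relation.ReflTransGen (fun a b => ∃ ha : a ≠ q, G.head (ρ.1 a ha) = b) v q

/-- The rotor-routing process started from a representative of `x` that is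
nonnegative away from `q` and from the rotor configuration of `T` oriented
towards `q` terminates at the rotor configuration of `T'` oriented towards
`q`. -/
def ActsTo (q : G.V) (x : G.Jac) (T T' : Finset G.D) : Prop :=
  ∃ D : G.Div0, G.divClass D = x ∧ (∀ v : G.V, v ≠ q → 0 ≤ (D : G.V → ℤ) v) ∧
    ∃ (ρ ρ' : G.RotorConfig q) (c' : G.V → ℤ),
      G.TowardRoot q T ρ ∧ G.TowardRoot q T' ρ' ∧
      Relation.ReflTransGen (G.Step q) ((D : G.V → ℤ), ρ) (c', ρ') ∧
      G.Terminal q (c', ρ')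

/-- The rotor-routing action of the sandpile group element `x` on the
spanning tree `T`, with basepoint `q`. -/
noncomputable def rotorAction (q : G.V) (x : G.Jac) (T : Finset G.D) :
    Finset G.D :=
  if h : ∃ T' : Finset G.D, G.IsSpanningTree T' ∧ G.ActsTo q x T T' then
    h.choose
  else T

/-! ### Angles -/

/-- The angle `∠ᵘ(d, d')` between two darts with the same tail `u`:
if `d = e₀, e₁, …, e_k = d'` are the consecutive darts in the cyclic order
at `u`, the angle is `∑_{i=1}^{k} ∂ eᵢ ∈ Jac(G)`. -/
noncomputable def dartAngle (d d' : G.D) : G.Jac :=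
  if h : ∃ k : ℕ, (⇑G.next)^[k] d = d' then
    ∑ i ∈ Finset.range (Nat.find h), G.dartBoundary ((⇑G.next)^[i + 1] d)
  else 0

/-- The angle `∠_v(T, T')` between two spanning trees `T, T'` based at `v`:
the sum over all vertices `u ≠ v` of the angles between the rotors of `T`
and of `T'` at `u` (both oriented towards `v`). -/
noncomputable def treeAngle (v : G.V) (T T' : Finset G.D) : G.Jac :=
  if h : ∃ p : G.RotorConfig v × G.RotorConfig v,
      G.TowardRoot v T p.1 ∧ G.TowardRoot v T' p.2 then
    ∑ u : G.V,
      if hu : u = v then 0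
      else G.dartAngle (h.choose.1.1 u hu) (h.choose.2.1 u hu)
  else 0


/-! ### The planar dual ribbon graph -/

/-- The dual ribbon graph `G*` of a ribbon graph `G`: its vertices are the
faces of `G`, its darts are the darts of `G`, where the dart `d`, viewed in
the dual, crosses `d` from the face after `d` (its right, its dual tail) to
the face before `d` (its left, its dual head), and the cyclic orders at the
faces are the counter-clockwise ones. -/
noncomputable def dual : RibbonGraph where
  V := G.Faces
  D := G.D
  fV := inferInstance
  dV := Classical.decEq _
  fD := G.fD
  dD := G.dD
  rev := G.rev
  rev_invol := G.rev_invol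
  rev_ne := G.rev_ne
  head := fun d => G.leftFace d
  next := G.revPerm * G.facePerm * G.revPerm
  next_tail := by
    intro d
    show G.leftFace (G.rev (G.rev (G.facePerm (G.rev d)))) = G.leftFace (G.rev d)
    rw [G.rev_invol]
    exact Quotient.sound ⟨-1, by simp⟩
  next_cyclic := by
    intro d d' h
    have h1 : G.facePerm.SameCycle (G.rev d) (G.rev d') := Quotient.exact h
    have h2 := h1.conj (g := G.revPerm)
    have hR : G.revPerm⁻¹ = G.revPerm := by
      rw [Equiv.Perm.inv_def]
      exact Function.Involutive.toPerm_symm G.rev_invol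
    rw [hR] at h2
    have e1 : G.revPerm (G.rev d) = d := G.rev_invol d
    have e2 : G.revPerm (G.rev d') = d' := G.rev_invol d'
    rw [e1, e2] at h2
    exact h2


end RibbonGraph

namespace Multigraph

variable (G : Multigraph)

lemma head_rev (d : G.D) : G.head (G.rev d) = G.tail d := rfl

lemma tail_rev (d : G.D) : G.tail (G.rev d) = G.head d := by
  unfold tail; rw [G.rev_invol]

lemma bMap_apply (x : G.D → ℤ) (v : G.V) :
    G.bMap x v = ∑ d ∈ Finset.univ.filter (fun d => G.head d = v), x d := rfl

lemma dartVec_eq (d e : G.D) :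
    G.dartVec d e = (if e = d then (1:ℤ) else 0) - (if e = G.rev d then 1 else 0) := by
  unfold dartVec
  rcases eq_or_ne e d with rfl | h1
  · simp [(G.rev_ne e).symm]
  · rcases eq_or_ne e (G.rev d) with rfl | h2
    · simp [G.rev_ne d]
    · simp [h1, h2]

lemma unitDivFun_add (a b c : G.V) :
    G.unitDivFun a b + G.unitDivFun b c = G.unitDivFun a c := by
  funext w; simp only [Pi.add_apply, unitDivFun]; ring

lemma unitDivFun_self (a : G.V) : G.unitDivFun a a = 0 := by
  funext w; simp [unitDivFun]

lemma bMap_dartVec (d : G.D) :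
    G.bMap (G.dartVec d) = G.unitDivFun (G.head d) (G.tail d) := by
  funext v
  rw [bMap_apply]
  simp only [dartVec_eq]
  rw [Finset.sum_sub_distrib, Finset.sum_ite_eq', Finset.sum_ite_eq']
  simp only [Finset.mem_filter, Finset.mem_univ, true_and, head_rev]
  unfold unitDivFun
  rw [if_congr (eq_comm (a := v) (b := G.head d)) rfl rfl,
    if_congr (eq_comm (a := v) (b := G.tail d)) rfl rfl]

/-- Telescoping: boundary of a chain of darts. -/
lemma bMap_chain : ∀ (l : List G.D) (d : G.D),
    List.Chain (fun a b => G.head a = G.tail b) d l →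
    G.bMap (G.listVec (d :: l)) = G.unitDivFun (G.head (l.getLastD d)) (G.tail d) := by
  intro l
  induction l with
  | nil =>
    intro d _
    simp only [List.getLastD_nil]
    show G.bMap (G.listVec [d]) = _
    unfold listVec
    simp [bMap_dartVec]
  | cons e t ih =>
    intro d hc
    replace hc := List.isChain_cons_cons.mp hc
    obtain ⟨h1, h2⟩ := hc
    have hsplit : G.listVec (d :: e :: t) = G.dartVec d + G.listVec (e :: t) := by
      unfold listVec; simp
    rw [hsplit, map_add, bMap_dartVec, ih e h2, List.getLastD_cons, ← h1, add_comm]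
    exact G.unitDivFun_add _ _ _

lemma bMap_listVec_of_cycle (l : List G.D) (hl : G.IsDirCycle l) :
    G.bMap (G.listVec l) = 0 := by
  obtain ⟨hne, hch, hcl, _⟩ := hl
  obtain ⟨d, t, rfl⟩ := List.exists_cons_of_ne_nil hne
  have hch' : List.Chain (fun a b => G.head a = G.tail b) d t := hch
  rw [G.bMap_chain t d hch']
  have hlast : (d :: t).getLast? = some (t.getLastD d) := by
    simp [List.getLast?_cons, List.getLastD_eq_getLast?]
  have := hcl (t.getLastD d) (by rw [hlast]; exact rfl) d (by rw [List.head?_cons]; exact rfl)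
  rw [this]
  exact G.unitDivFun_self _

lemma sum_eq_zero_of_mem_EdgeGroup (x : G.D → ℤ) (hx : x ∈ G.EdgeGroup) :
    ∑ d, x d = 0 := by
  have h1 : ∑ d, x (G.rev d) = ∑ d, x d :=
    Fintype.sum_equiv G.revPerm _ _ (fun d => rfl)
  have hxd : ∀ d, x (G.rev d) = -x d := hx
  have h2 : ∑ d, x (G.rev d) = -∑ d, x d := by
    simp only [hxd]
    exact Finset.sum_neg_distrib (f := x)
  omega

lemma bMap_mem_Div0 (x : G.D → ℤ) (hx : x ∈ G.EdgeGroup) :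
    G.bMap x ∈ G.Div0 := by
  have : ∑ v, G.bMap x v = 0 := by
    simp only [bMap_apply]
    rw [Finset.sum_fiberwise_of_maps_to (fun d _ => Finset.mem_univ (G.head d))]
    exact G.sum_eq_zero_of_mem_EdgeGroup x hx
  exact this

lemma cutVec_eq (U : Finset G.V) (d : G.D) :
    G.cutVec U d = (if G.tail d ∈ U then (1:ℤ) else 0) - (if G.head d ∈ U then 1 else 0) := by
  unfold cutVec
  by_cases h1 : G.tail d ∈ U <;> by_cases h2 : G.head d ∈ U <;> simp [h1, h2]

lemma cutVec_mem_EdgeGroup (U : Finset G.V) : G.cutVec U ∈ G.EdgeGroup := by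
  intro d
  simp only [cutVec_eq, tail_rev, head_rev]
  by_cases h1 : G.tail d ∈ U <;> by_cases h2 : G.head d ∈ U <;> simp [h1, h2]

lemma cutSpace_le_EdgeGroup : G.CutSpace ≤ G.EdgeGroup := by
  rw [CutSpace, AddSubgroup.closure_le]
  rintro _ ⟨U, rfl⟩
  exact G.cutVec_mem_EdgeGroup U

lemma indeg_eq_degree (v : G.V) :
    (Finset.univ.filter fun d : G.D => G.head d = v).card = G.degree v := by
  unfold degree
  apply Finset.card_bij (fun d _ => G.rev d)
  · intro d hd
    simp only [Finset.mem_filter, Finset.mem_univ, true_and] at hd ⊢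
    rw [tail_rev, hd]
  · intro a _ b _ h
    exact G.rev_invol.injective h
  · intro b hb
    simp only [Finset.mem_filter, Finset.mem_univ, true_and] at hb ⊢
    exact ⟨G.rev b, by rw [head_rev, hb], G.rev_invol b⟩

lemma bMap_cutVec_singleton (hloop : G.Loopless) (v : G.V) :
    G.bMap (G.cutVec {v}) = G.prin v := by
  funext w
  rw [bMap_apply]
  simp only [cutVec_eq, Finset.mem_singleton]
  rw [Finset.sum_sub_distrib]
  have h1 : (∑ d ∈ Finset.univ.filter (fun d => G.head d = w),
      if G.tail d = v then (1:ℤ) else 0) = (G.mul v w : ℤ) := by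
    rw [Finset.sum_boole, Finset.filter_filter]
    unfold mul
    norm_cast
    congr 1
    ext d
    simp only [Finset.mem_filter, Finset.mem_univ, true_and]
    tauto
  have h2 : (∑ d ∈ Finset.univ.filter (fun d => G.head d = w),
      if G.head d = v then (1:ℤ) else 0) = if w = v then (G.degree v : ℤ) else 0 := by
    rw [Finset.sum_boole, Finset.filter_filter]
    by_cases h : w = v
    · subst h
      rw [if_pos rfl, ← G.indeg_eq_degree w]
      norm_cast
      congr 1
      ext d
      simp only [Finset.mem_filter, Finset.mem_univ, true_and, and_self]
    · rw [if_neg h]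
      have : (Finset.univ.filter fun d : G.D => G.head d = w ∧ G.head d = v) = ∅ := by
        ext d
        simp only [Finset.mem_filter, Finset.mem_univ, true_and, Finset.notMem_empty,
          iff_false]
        rintro ⟨rfl, rfl⟩
        exact h rfl
      rw [this]
      simp
  rw [h1, h2]
  unfold prin
  by_cases h : w = v
  · subst h
    have hmul : G.mul w w = 0 := by
      unfold mul
      rw [Finset.card_eq_zero]
      ext d
      simp only [Finset.mem_filter, Finset.mem_univ, true_and, Finset.notMem_empty, iff_false]
      rintro ⟨h1, h2⟩
      exact hloop d (h2.trans h1.symm)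
    rw [if_pos rfl, if_pos rfl, hmul]
    simp
  · rw [if_neg h, if_neg h]
    simp

lemma cutVec_sum (U : Finset G.V) : G.cutVec U = ∑ v ∈ U, G.cutVec {v} := by
  funext d
  rw [Finset.sum_apply]
  simp only [cutVec_eq, Finset.mem_singleton]
  rw [Finset.sum_sub_distrib, Finset.sum_ite_eq, Finset.sum_ite_eq]

lemma listVec_mem_EdgeGroup : ∀ l : List G.D, G.listVec l ∈ G.EdgeGroup := by
  intro l
  induction l with
  | nil => exact G.EdgeGroup.zero_mem
  | cons e t ih =>
    have : G.listVec (e :: t) = G.dartVec e + G.listVec t := by unfold listVec; simp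
    rw [this]
    exact G.EdgeGroup.add_mem (G.dartVec_mem e) ih

lemma listVec_apply (l : List G.D) (hnd : l.Nodup) (hrev : ∀ a ∈ l, G.rev a ∉ l) (d : G.D) :
    G.listVec l d = if d ∈ l then 1 else if G.rev d ∈ l then -1 else 0 := by
  induction l with
  | nil => simp [listVec]
  | cons e t ih =>
    have hnd' : t.Nodup := (List.nodup_cons.mp hnd).2
    have het : e ∉ t := (List.nodup_cons.mp hnd).1
    have hrev' : ∀ a ∈ t, G.rev a ∉ t := fun a ha hb =>
      hrev a (List.mem_cons_of_mem _ ha) (List.mem_cons_of_mem _ hb)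
    have hstep : G.listVec (e :: t) d = G.dartVec e d + G.listVec t d := by
      unfold listVec; simp
    rw [hstep, ih hnd' hrev', dartVec_eq]
    by_cases h1 : d = e
    · subst h1
      have hrd : G.rev d ∉ d :: t := hrev d (List.mem_cons_self (a := d) (l := t))
      have hrd_t : G.rev d ∉ t := fun h => hrd (List.mem_cons_of_mem _ h)
      simp [het, hrd_t, (G.rev_ne d).symm]
    · by_cases h2 : d = G.rev e
      · have hd : d ∉ e :: t := h2 ▸ hrev e (List.mem_cons_self (a := e) (l := t))
        have hd_t : d ∉ t := fun h => hd (List.mem_cons_of_mem _ h)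
        have hrd : G.rev d = e := by rw [h2, G.rev_invol]
        have hrd_t : G.rev d ∉ t := hrd ▸ het
        have hrd_mem : G.rev d ∈ e :: t := hrd ▸ (List.mem_cons_self (a := e) (l := t))
        have h3 : G.rev e ∉ t := h2 ▸ hd_t
        simp [h1, h2, h3, G.rev_ne e, G.rev_invol e, het]
      · have hre : G.rev d ≠ e := fun h => h2 (by rw [← h, G.rev_invol])
        simp [h1, h2, hre, List.mem_cons]

lemma exists_pos_succ (x : G.D → ℤ) (hx : x ∈ G.EdgeGroup) (h0 : G.bMap x = 0)
    (d : G.D) (hd : 0 < x d) : ∃ d', G.tail d' = G.head d ∧ 0 < x d' := by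
  have hxd : ∀ e, x (G.rev e) = -x e := hx
  have hsum : ∑ e ∈ Finset.univ.filter (fun e => G.head e = G.head d), x e = 0 := by
    have := congrFun h0 (G.head d)
    rwa [bMap_apply] at this
  have hneg : ∃ e ∈ Finset.univ.filter (fun e => G.head e = G.head d), x e < 0 := by
    by_contra h
    push_neg at h
    have hpos : 0 < ∑ e ∈ Finset.univ.filter (fun e => G.head e = G.head d), x e :=
      Finset.sum_pos' h ⟨d, by simp, hd⟩
    omega
  obtain ⟨e, he, hxe⟩ := hneg
  simp only [Finset.mem_filter, Finset.mem_univ, true_and] at he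
  exact ⟨G.rev e, by rw [tail_rev, he], by rw [hxd]; omega⟩

lemma flow_aux : ∀ (N : ℕ) (x : G.D → ℤ), x ∈ G.EdgeGroup → G.bMap x = 0 →
    (∑ d, (x d).natAbs) ≤ N → x ∈ G.CycleSpace := by
  intro N
  induction N with
  | zero =>
    intro x _ _ hle
    have h := Nat.le_zero.mp hle
    rw [Finset.sum_eq_zero_iff] at h
    have : x = 0 := by
      funext d
      have := h d (Finset.mem_univ d)
      simp only [Pi.zero_apply]
      omega
    rw [this]
    exact G.CycleSpace.zero_mem
  | succ N ih =>
    intro x hx h0 hle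
    have hxd : ∀ e, x (G.rev e) = -x e := hx
    by_cases hz : x = 0
    · rw [hz]; exact G.CycleSpace.zero_mem
    have hpos : ∃ d, 0 < x d := by
      have : ∃ d, x d ≠ 0 := by
        by_contra h
        push_neg at h
        exact hz (funext h)
      obtain ⟨d, hd⟩ := this
      rcases lt_or_gt_of_ne hd with h | h
      · exact ⟨G.rev d, by rw [hxd]; omega⟩
      · exact ⟨d, h⟩
    obtain ⟨d₀, hd₀⟩ := hpos
    have hsucc : ∀ d : {d : G.D // 0 < x d}, ∃ d' : {d : G.D // 0 < x d},
        G.tail d'.1 = G.head d.1 := by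
      intro d
      obtain ⟨d', h1, h2⟩ := G.exists_pos_succ x hx h0 d.1 d.2
      exact ⟨⟨d', h2⟩, h1⟩
    choose f hf using hsucc
    set seq : ℕ → {d : G.D // 0 < x d} := fun n => f^[n] ⟨d₀, hd₀⟩ with hseq
    have hseq_succ : ∀ n, G.tail (seq (n+1)).1 = G.head (seq n).1 := by
      intro n
      have : seq (n+1) = f (seq n) := Function.iterate_succ_apply' f n _
      rw [this]
      exact hf _
    have hpig : ∃ n, ∃ m, m < n ∧ G.tail (seq m).1 = G.tail (seq n).1 := by
      obtain ⟨a, b, hab, heq⟩ := Fintype.exists_ne_map_eq_of_card_lt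
        (fun i : Fin (Fintype.card G.V + 1) => G.tail (seq i).1) (by simp)
      rcases lt_or_gt_of_ne (show (a:ℕ) ≠ b from fun h => hab (Fin.ext h)) with h | h
      · exact ⟨b, a, h, heq⟩
      · exact ⟨a, b, h, heq.symm⟩
    set j := Nat.find hpig with hjdef
    obtain ⟨i, hij, htail⟩ : ∃ m, m < j ∧ G.tail (seq m).1 = G.tail (seq j).1 :=
      Nat.find_spec hpig
    set l : List G.D := (List.range (j - i)).map (fun k => (seq (i + k)).1) with hl
    have hlen : l.length = j - i := by simp [hl]
    have hlne : l ≠ [] := by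
      intro h
      rw [h] at hlen
      simp at hlen
      omega
    have hmem_pos : ∀ e ∈ l, 0 < x e := by
      intro e he
      rw [hl] at he
      simp only [List.mem_map, List.mem_range] at he
      obtain ⟨k, _, rfl⟩ := he
      exact (seq (i + k)).2
    have hget : ∀ (k : ℕ) (hk : k < l.length), l.get ⟨k, hk⟩ = (seq (i+k)).1 := by
      intro k hk
      simp [hl]
    have hinj : ∀ k ∈ List.range (j - i), ∀ k' ∈ List.range (j - i),
        G.tail (seq (i+k)).1 = G.tail (seq (i+k')).1 → k = k' := by
      intro k hk k' hk' heq
      simp only [List.mem_range] at hk hk'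
      by_contra hne
      rcases Nat.lt_or_ge k k' with hlt | hge
      · exact Nat.find_min hpig (show i + k' < j by omega) ⟨i + k, by omega, heq⟩
      · have hlt : k' < k := by omega
        exact Nat.find_min hpig (show i + k < j by omega) ⟨i + k', by omega, heq.symm⟩
    have htails : (l.map G.tail).Nodup := by
      rw [hl, List.map_map]
      exact List.Nodup.map_on (fun k hk k' hk' h => hinj k hk k' hk' h) List.nodup_range
    have hnd : l.Nodup := List.Nodup.of_map _ htails
    have hrevl : ∀ a ∈ l, G.rev a ∉ l := by
      intro a ha hb
      have h1 := hmem_pos a ha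
      have h2 := hmem_pos _ hb
      rw [hxd] at h2
      omega
    have hchain : l.Chain' (fun a b => G.head a = G.tail b) := by
      show List.IsChain (fun a b => G.head a = G.tail b) l
      rw [List.isChain_iff_getElem]
      intro k hk
      have hk1 : k < l.length := by omega
      have hk2 : k + 1 < l.length := by omega
      have e1 := hget k hk1
      have e2 := hget (k+1) hk2
      simp only [List.get_eq_getElem] at e1 e2
      rw [e1, e2]
      have : i + (k + 1) = (i + k) + 1 := by omega
      rw [this]
      exact (hseq_succ (i + k)).symm
    have hclose : ∀ a ∈ l.getLast?, ∀ b ∈ l.head?, G.head a = G.tail b := by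
      intro a ha b hb
      have hlpos : 0 < l.length := by rw [hlen]; omega
      have hhead : l.head? = some (l.get ⟨0, hlpos⟩) := by
        rw [List.head?_eq_getElem?, List.getElem?_eq_getElem hlpos]
        rfl
      have hlast : l.getLast? = some (l.get ⟨l.length - 1, by omega⟩) := by
        rw [List.getLast?_eq_getElem?, List.getElem?_eq_getElem (by omega)]
        rfl
      rw [hhead] at hb
      rw [hlast] at ha
      have ha' : a = (seq (i + (l.length - 1))).1 := by
        rw [Option.mem_def, Option.some_inj] at ha
        rw [← ha, hget]
      have hb' : b = (seq (i + 0)).1 := by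
        rw [Option.mem_def, Option.some_inj] at hb
        rw [← hb, hget]
      rw [ha', hb']
      have h1 : i + (l.length - 1) = j - 1 := by rw [hlen]; omega
      have h2 : (j - 1) + 1 = j := by omega
      rw [h1]
      have := hseq_succ (j - 1)
      rw [h2] at this
      rw [← this, ← htail]
      simp
    have hcyc : G.IsDirCycle l := ⟨hlne, hchain, hclose, htails⟩
    set c := G.listVec l with hc
    have hcmem : c ∈ G.CycleSpace := AddSubgroup.subset_closure ⟨l, hcyc, rfl⟩
    have hcval : ∀ d, c d = if d ∈ l then 1 else if G.rev d ∈ l then -1 else 0 :=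
      G.listVec_apply l hnd hrevl
    have htri : ∀ d, (c d = 0) ∨ (c d = 1 ∧ 1 ≤ x d) ∨ (c d = -1 ∧ x d ≤ -1) := by
      intro d
      rw [hcval d]
      by_cases h1 : d ∈ l
      · exact Or.inr (Or.inl ⟨if_pos h1, hmem_pos d h1⟩)
      · by_cases h2 : G.rev d ∈ l
        · refine Or.inr (Or.inr ⟨by rw [if_neg h1, if_pos h2], ?_⟩)
          have := hmem_pos _ h2
          rw [hxd] at this
          omega
        · exact Or.inl (by rw [if_neg h1, if_neg h2])
    set y := x - c with hy
    have hyE : y ∈ G.EdgeGroup := G.EdgeGroup.sub_mem hx (G.listVec_mem_EdgeGroup l)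
    have hy0 : G.bMap y = 0 := by
      rw [hy, map_sub, h0, G.bMap_listVec_of_cycle l hcyc, sub_zero]
    have hmem0 : (seq (i + 0)).1 ∈ l := by
      rw [hl]
      simp only [List.mem_map, List.mem_range]
      exact ⟨0, by omega, rfl⟩
    have hnorm : ∑ d, (y d).natAbs < ∑ d, (x d).natAbs := by
      apply Finset.sum_lt_sum
      · intro d _
        rcases htri d with h | ⟨h, h'⟩ | ⟨h, h'⟩ <;>
          · simp only [hy, Pi.sub_apply, h]
            omega
      · refine ⟨(seq (i + 0)).1, Finset.mem_univ _, ?_⟩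
        rcases htri (seq (i + 0)).1 with h | ⟨h, h'⟩ | ⟨h, h'⟩
        · rw [hcval, if_pos hmem0] at h
          omega
        · simp only [hy, Pi.sub_apply, h]
          omega
        · rw [hcval, if_pos hmem0] at h
          omega
    have hyC : y ∈ G.CycleSpace := ih y hyE hy0 (by omega)
    have hxy : x = y + c := by rw [hy]; ring
    rw [hxy]
    exact G.CycleSpace.add_mem hyC hcmem

lemma flow_mem_cycleSpace (x : G.D → ℤ) (hx : x ∈ G.EdgeGroup) (h0 : G.bMap x = 0) :
    x ∈ G.CycleSpace :=
  G.flow_aux (∑ d, (x d).natAbs) x hx h0 le_rfl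

lemma cycleSpace_le_ker : G.CycleSpace ≤ G.bMap.ker := by
  rw [CycleSpace, AddSubgroup.closure_le]
  rintro _ ⟨l, hl, rfl⟩
  exact G.bMap_listVec_of_cycle l hl

lemma cutSpace_le_comap (hloop : G.Loopless) :
    G.CutSpace ≤ AddSubgroup.comap G.bMap G.Prin := by
  rw [CutSpace, AddSubgroup.closure_le]
  rintro _ ⟨U, rfl⟩
  show G.bMap (G.cutVec U) ∈ G.Prin
  rw [cutVec_sum, map_sum]
  apply AddSubgroup.sum_mem
  intro v _
  rw [G.bMap_cutVec_singleton hloop v]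
  exact AddSubgroup.subset_closure ⟨v, rfl⟩

lemma prin_le_map_cutSpace (hloop : G.Loopless) :
    G.Prin ≤ AddSubgroup.map G.bMap G.CutSpace := by
  rw [Prin, AddSubgroup.closure_le]
  rintro _ ⟨v, rfl⟩
  exact ⟨G.cutVec {v}, AddSubgroup.subset_closure ⟨{v}, rfl⟩,
    G.bMap_cutVec_singleton hloop v⟩

lemma mem_sup_of_bMap_mem_prin (hloop : G.Loopless) (x : G.D → ℤ)
    (hx : x ∈ G.EdgeGroup) (h : G.bMap x ∈ G.Prin) :
    x ∈ G.CycleSpace ⊔ G.CutSpace := by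
  obtain ⟨z, hz, hbz⟩ := G.prin_le_map_cutSpace hloop h
  have hzE : z ∈ G.EdgeGroup := G.cutSpace_le_EdgeGroup hz
  have hy : x - z ∈ G.CycleSpace := by
    apply G.flow_mem_cycleSpace _ (G.EdgeGroup.sub_mem hx hzE)
    rw [map_sub, hbz, sub_self]
  have : x = (x - z) + z := by ring
  rw [this]
  exact AddSubgroup.add_mem _ (AddSubgroup.mem_sup_left hy) (AddSubgroup.mem_sup_right hz)

lemma unitDivFun_mem_map (hconn : G.Connected) (a b : G.V) :
    G.unitDivFun a b ∈ AddSubgroup.map G.bMap G.EdgeGroup := by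
  have h := hconn b a
  induction h with
  | refl =>
    rw [unitDivFun_self]
    exact zero_mem _
  | tail hbc hca ih =>
    rename_i c a'
    obtain ⟨d, hd1, hd2⟩ := hca
    rw [← G.unitDivFun_add a' c b]
    apply add_mem _ ih
    refine ⟨G.dartVec d, G.dartVec_mem d, ?_⟩
    rw [bMap_dartVec, hd1, hd2]

lemma div0_le_map (hconn : G.Connected) (f : G.V → ℤ) (hf : f ∈ G.Div0) :
    f ∈ AddSubgroup.map G.bMap G.EdgeGroup := by
  have hsum : ∑ v, f v = 0 := hf
  by_cases hV : Nonempty G.V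
  · obtain ⟨v₀⟩ := hV
    have hrepr : f = ∑ v, f v • G.unitDivFun v v₀ := by
      funext w
      rw [Finset.sum_apply]
      simp only [Pi.smul_apply, unitDivFun, smul_eq_mul, mul_sub, mul_ite, mul_one, mul_zero]
      rw [Finset.sum_sub_distrib, Finset.sum_ite_eq]
      by_cases h : w = v₀
      · simp [h, hsum]
      · simp [h]
    rw [hrepr]
    apply AddSubgroup.sum_mem
    intro v _
    exact AddSubgroup.zsmul_mem _ (G.unitDivFun_mem_map hconn v v₀) _
  · have : f = 0 := funext fun v => absurd ⟨v⟩ hV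
    rw [this]
    exact zero_mem _

/-- The boundary map restricted to `ℤE`, landing in degree-zero divisors. -/
def bRes : G.EdgeGroup →+ G.Div0 where
  toFun x := ⟨G.bMap x.1, G.bMap_mem_Div0 x.1 x.2⟩
  map_zero' := Subtype.ext (by simp)
  map_add' x y := Subtype.ext (by simp)

/-- The boundary homomorphism `ℤE → Jac(G)`. -/
def bJac : G.EdgeGroup →+ G.Jac :=
  (QuotientAddGroup.mk' (G.Prin.addSubgroupOf G.Div0)).comp G.bRes

lemma bJac_eq_zero_iff (x : G.EdgeGroup) :
    G.bJac x = 0 ↔ G.bMap x.1 ∈ G.Prin := by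
  show QuotientAddGroup.mk' _ (G.bRes x) = 0 ↔ _
  rw [QuotientAddGroup.mk'_apply, QuotientAddGroup.eq_zero_iff,
    AddSubgroup.mem_addSubgroupOf]
  rfl

end Multigraph


/-- For a finite connected loopless multigraph `G`, the boundary
map `e ↦ [e⁺ - e⁻]` induces a group isomorphism `∂_G : ℰ(G) → Jac(G)`, where
`ℰ(G) = ℤE/(𝒞 + 𝒞*)`. -/
theorem boundary_iso (G : Multigraph)
    (hconn : G.Connected) (hloop : G.Loopless) :
    ∃ ψ : G.EGroup ≃+ G.Jac, ∀ d : G.D, ψ (G.eClass d) = G.dartBoundary d := by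
  have hker : ∀ x ∈ (G.CycleSpace ⊔ G.CutSpace).addSubgroupOf G.EdgeGroup,
      G.bJac x = 0 := by
    intro x hx
    rw [AddSubgroup.mem_addSubgroupOf, AddSubgroup.mem_sup] at hx
    obtain ⟨y, hy, z, hz, hyz⟩ := hx
    rw [G.bJac_eq_zero_iff, ← hyz, map_add]
    have h1 : G.bMap y = 0 := G.cycleSpace_le_ker hy
    have h2 : G.bMap z ∈ G.Prin := G.cutSpace_le_comap hloop hz
    rw [h1, zero_add]
    exact h2
  let φ : G.EGroup →+ G.Jac := QuotientAddGroup.lift _ G.bJac hker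
  have hφ_mk : ∀ x : G.EdgeGroup, φ (QuotientAddGroup.mk x) = G.bJac x := fun _ => rfl
  have hinj : ∀ a : G.EGroup, φ a = 0 → a = 0 := by
    intro a
    refine QuotientAddGroup.induction_on a ?_
    intro x hx0
    rw [hφ_mk, G.bJac_eq_zero_iff] at hx0
    have hmem := G.mem_sup_of_bMap_mem_prin hloop x.1 x.2 hx0
    refine (QuotientAddGroup.eq_zero_iff _).mpr ?_
    rw [AddSubgroup.mem_addSubgroupOf]
    exact hmem
  have hsurj : Function.Surjective φ := by
    intro q
    refine QuotientAddGroup.induction_on q ?_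
    intro D
    obtain ⟨x, hxE, hbx⟩ := G.div0_le_map hconn D.1 D.2
    refine ⟨QuotientAddGroup.mk ⟨x, hxE⟩, ?_⟩
    rw [hφ_mk]
    show QuotientAddGroup.mk' _ (G.bRes ⟨x, hxE⟩) = _
    rw [QuotientAddGroup.mk'_apply]
    congr 1
    exact Subtype.ext hbx
  refine ⟨AddEquiv.ofBijective φ ⟨(injective_iff_map_eq_zero φ).mpr hinj, hsurj⟩, ?_⟩
  intro d
  show φ (G.eClass d) = _
  have h1 : φ (G.eClass d) = G.bJac ⟨G.dartVec d, G.dartVec_mem d⟩ := rfl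
  rw [h1]
  show QuotientAddGroup.mk' _ (G.bRes ⟨G.dartVec d, G.dartVec_mem d⟩) = _
  rw [QuotientAddGroup.mk'_apply]
  unfold Multigraph.dartBoundary Multigraph.unitClass Multigraph.divClass Multigraph.unitDiv
  congr 1
  exact Subtype.ext (G.bMap_dartVec d)
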